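/- Let ε > 0, b₁ > 0 and a ∈ ℝ. Suppose η : [0,∞) → ℝ is continuous with η(t) → η* as t → ∞, and ξ : [0,∞) → ℝ is differentiable with ξ′(t) = ε(b₁(η(t) − ξ(t)) − a(1 − η(t))) for all t ≥ 0. Then ξ(t) → (1 + a/b₁)η* − a/b₁ as t → ∞. Consequently, any solution (w(t), η(t), ξ(t)) of the retreat vector field V₊ whose planar component (w(t), η(t)) converges to the planar sink (w*₊,s, η*₊,s) converges to the equilibrium Q*₊,s = (w*₊,s, η*₊,s, (1+a/b₁)η*₊,s − a/b₁); the analogous statement holds for V₋ with b₀ in place of b₁. -/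

import Mathlib

open Filter Set

/-- A scalar linear decay lemma: if `y' = -k y + r` with `k > 0` and `r → 0`,
then `y → 0`. -/
lemma decay_aux (k : ℝ) (hk : 0 < k) (y r : ℝ → ℝ)
    (hy : ∀ t : ℝ, 0 ≤ t → HasDerivAt y (-k * y t + r t) t)
    (hr : Tendsto r atTop (nhds 0)) :
    Tendsto y atTop (nhds 0) := by
  rw [NormedAddCommGroup.tendsto_nhds_zero]
  intro e he
  have hδ : 0 < e / 4 := by positivity
  set δ := e / 4 with hδdef
  have hrk : ∀ᶠ t in atTop, ‖r t‖ < k * δ :=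
    NormedAddCommGroup.tendsto_nhds_zero.mp hr (k * δ) (by positivity)
  obtain ⟨T₀, hT₀⟩ := eventually_atTop.mp hrk
  set T := max T₀ 0 with hTdef
  have hT0 : (0 : ℝ) ≤ T := le_max_right _ _
  have hrT : ∀ t, T ≤ t → |r t| < k * δ := fun t ht =>
    (Real.norm_eq_abs (r t)) ▸ hT₀ t (le_trans (le_max_left _ _) ht)
  have hE : ∀ t : ℝ, HasDerivAt (fun s => Real.exp (k * s)) (k * Real.exp (k * t)) t := by
    intro t
    have := (Real.hasDerivAt_exp (k * t)).comp t ((hasDerivAt_id t).const_mul k)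
    exact this.congr_deriv (by ring)
  set C := |y T| + δ with hCdef
  have hC : 0 < C := by positivity
  -- upper bound function p and lower bound function q
  set p : ℝ → ℝ := fun t => Real.exp (k * t) * (y t - δ) with hpdef
  set q : ℝ → ℝ := fun t => Real.exp (k * t) * (y t + δ) with hqdef
  have hpderiv : ∀ t : ℝ, 0 ≤ t →
      HasDerivAt p (Real.exp (k * t) * (r t - k * δ)) t := by
    intro t ht
    have h := (hE t).mul ((hy t ht).sub_const δ)
    exact h.congr_deriv (by ring)
  have hqderiv : ∀ t : ℝ, 0 ≤ t →
      HasDerivAt q (Real.exp (k * t) * (r t + k * δ)) t := by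
    intro t ht
    have h := (hE t).mul ((hy t ht).add_const δ)
    exact h.congr_deriv (by ring)
  have hpanti : AntitoneOn p (Ici T) := by
    apply antitoneOn_of_deriv_nonpos (convex_Ici T)
    · exact fun x hx => ((hpderiv x (hT0.trans hx)).continuousAt).continuousWithinAt
    · intro x hx
      rw [interior_Ici] at hx
      exact ((hpderiv x (hT0.trans hx.le)).differentiableAt).differentiableWithinAt
    · intro x hx
      rw [interior_Ici] at hx
      rw [(hpderiv x (hT0.trans hx.le)).deriv]
      have h1 := (abs_lt.mp (hrT x hx.le)).2
      have h2 := Real.exp_pos (k * x)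
      nlinarith
  have hqmono : MonotoneOn q (Ici T) := by
    apply monotoneOn_of_deriv_nonneg (convex_Ici T)
    · exact fun x hx => ((hqderiv x (hT0.trans hx)).continuousAt).continuousWithinAt
    · intro x hx
      rw [interior_Ici] at hx
      exact ((hqderiv x (hT0.trans hx.le)).differentiableAt).differentiableWithinAt
    · intro x hx
      rw [interior_Ici] at hx
      rw [(hqderiv x (hT0.trans hx.le)).deriv]
      have h1 := (abs_lt.mp (hrT x hx.le)).1
      have h2 := Real.exp_pos (k * x)
      nlinarith
  have hup : ∀ t, T ≤ t → y t ≤ δ + Real.exp (k * (T - t)) * C := by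
    intro t ht
    have h1 : p t ≤ p T := hpanti (mem_Ici.mpr le_rfl) (mem_Ici.mpr ht) ht
    have e1 : (0:ℝ) < Real.exp (k * t) := Real.exp_pos _
    have e2 : (0:ℝ) < Real.exp (k * (T - t)) := Real.exp_pos _
    have e3 : Real.exp (k * (T - t)) * Real.exp (k * t) = Real.exp (k * T) := by
      rw [← Real.exp_add]; ring_nf
    have h4 : y T - δ ≤ C := by
      have := le_abs_self (y T); simp only [hCdef]; linarith
    have h5 : Real.exp (k * T) * (y T - δ) ≤ Real.exp (k * T) * C := by
      exact mul_le_mul_of_nonneg_left h4 (Real.exp_pos _).le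
    simp only [hpdef] at h1
    nlinarith
  have hlow : ∀ t, T ≤ t → -δ - Real.exp (k * (T - t)) * C ≤ y t := by
    intro t ht
    have h1 : q T ≤ q t := hqmono (mem_Ici.mpr le_rfl) (mem_Ici.mpr ht) ht
    have e1 : (0:ℝ) < Real.exp (k * t) := Real.exp_pos _
    have e2 : (0:ℝ) < Real.exp (k * (T - t)) := Real.exp_pos _
    have e3 : Real.exp (k * (T - t)) * Real.exp (k * t) = Real.exp (k * T) := by
      rw [← Real.exp_add]; ring_nf
    have h4 : -C ≤ y T + δ := by
      have := neg_abs_le (y T); simp only [hCdef]; linarith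
    have h5 : Real.exp (k * T) * (-C) ≤ Real.exp (k * T) * (y T + δ) := by
      exact mul_le_mul_of_nonneg_left h4 (Real.exp_pos _).le
    simp only [hqdef] at h1
    nlinarith
  -- the exponential tail eventually small
  have htail : Tendsto (fun t => Real.exp (k * (T - t)) * C) atTop (nhds 0) := by
    have h1 : Tendsto (fun t : ℝ => T - t) atTop atBot := by
      simpa [sub_eq_add_neg] using tendsto_atBot_add_const_left atTop T tendsto_neg_atTop_atBot
    have h2 : Tendsto (fun t : ℝ => k * (T - t)) atTop atBot := h1.const_mul_atBot hk
    have h3 : Tendsto (fun t : ℝ => Real.exp (k * (T - t))) atTop (nhds 0) :=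
      Real.tendsto_exp_atBot.comp h2
    simpa using h3.mul_const C
  have hsmall : ∀ᶠ t in atTop, Real.exp (k * (T - t)) * C < δ :=
    htail.eventually_lt_const hδ
  filter_upwards [eventually_ge_atTop T, hsmall] with t ht hsm
  rw [Real.norm_eq_abs, abs_lt]
  constructor
  · have := hlow t ht; simp only [hδdef] at *; linarith
  · have := hup t ht; simp only [hδdef] at *; linarith

/-- Main claim as a standalone lemma. -/
lemma iceline_main (ε b1 a : ℝ) (hε : 0 < ε) (hb1 : 0 < b1)
    (ηstar : ℝ) (η ξ : ℝ → ℝ)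
    (hη_lim : Tendsto η atTop (nhds ηstar))
    (hξ : ∀ t : ℝ, 0 ≤ t →
      HasDerivAt ξ (ε * (b1 * (η t - ξ t) - a * (1 - η t))) t) :
    Tendsto ξ atTop (nhds ((1 + a / b1) * ηstar - a / b1)) := by
  set L := (1 + a / b1) * ηstar - a / b1 with hL
  have hb1' : b1 ≠ 0 := ne_of_gt hb1
  have key : Tendsto (fun t => ξ t - L) atTop (nhds 0) := by
    apply decay_aux (ε * b1) (mul_pos hε hb1) _ (fun t => ε * (b1 + a) * (η t - ηstar))
    · intro t ht
      have h := (hξ t ht).sub_const L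
      refine h.congr_deriv ?_
      simp only [hL]
      field_simp
      ring
    · have h : Tendsto (fun t => ε * (b1 + a) * (η t - ηstar)) atTop
          (nhds (ε * (b1 + a) * (ηstar - ηstar))) :=
        ((hη_lim.sub_const ηstar).const_mul _)
      simpa using h
  exact tendsto_sub_nhds_zero_iff.mp key

theorem iceline_limit
    (ε b1 a : ℝ) (hε : 0 < ε) (hb1 : 0 < b1)
    (ηstar : ℝ) (η ξ : ℝ → ℝ)
    (hη_cont : ContinuousOn η (Ici 0))
    (hη_lim : Tendsto η atTop (nhds ηstar))
    (hξ : ∀ t : ℝ, 0 ≤ t →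
      HasDerivAt ξ (ε * (b1 * (η t - ξ t) - a * (1 - η t))) t) :
    -- main claim
    Tendsto ξ atTop (nhds ((1 + a/b1) * ηstar - a/b1)) ∧
    -- consequence for solutions of the retreat field V₊
    (∀ (τ ρ : ℝ) (F Gplus : ℝ → ℝ) (w η' ξ' : ℝ → ℝ) (ws ηs : ℝ),
      (∀ t : ℝ, 0 ≤ t → HasDerivAt w (-τ * (w t - F (η' t))) t) →
      (∀ t : ℝ, 0 ≤ t → HasDerivAt η' (ρ * (w t - Gplus (η' t))) t) →
      (∀ t : ℝ, 0 ≤ t →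
        HasDerivAt ξ' (ε * (b1 * (η' t - ξ' t) - a * (1 - η' t))) t) →
      Tendsto (fun t => (w t, η' t)) atTop (nhds (ws, ηs)) →
      Tendsto ξ' atTop (nhds ((1 + a/b1) * ηs - a/b1))) ∧
    -- analogous statement for the advance field V₋ with b₀ in place of b₁
    (∀ b0 : ℝ, 0 < b0 →
      ∀ (τ ρ : ℝ) (F Gminus : ℝ → ℝ) (w η' ξ' : ℝ → ℝ) (ws ηs : ℝ),
      (∀ t : ℝ, 0 ≤ t → HasDerivAt w (-τ * (w t - F (η' t))) t) →
      (∀ t : ℝ, 0 ≤ t → HasDerivAt η' (ρ * (w t - Gminus (η' t))) t) →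
      (∀ t : ℝ, 0 ≤ t →
        HasDerivAt ξ' (ε * (b0 * (η' t - ξ' t) - a * (1 - η' t))) t) →
      Tendsto (fun t => (w t, η' t)) atTop (nhds (ws, ηs)) →
      Tendsto ξ' atTop (nhds ((1 + a/b0) * ηs - a/b0))) := by
  refine ⟨iceline_main ε b1 a hε hb1 ηstar η ξ hη_lim hξ, ?_, ?_⟩
  · intro τ ρ F Gplus w η' ξ' ws ηs hw hη' hξ' htend
    have hηlim : Tendsto η' atTop (nhds ηs) := by
      have := (continuous_snd.tendsto (ws, ηs)).comp htend
      simpa [Function.comp_def] using this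
    exact iceline_main ε b1 a hε hb1 ηs η' ξ' hηlim hξ'
  · intro b0 hb0 τ ρ F Gminus w η' ξ' ws ηs hw hη' hξ' htend
    have hηlim : Tendsto η' atTop (nhds ηs) := by
      have := (continuous_snd.tendsto (ws, ηs)).comp htend
      simpa [Function.comp_def] using this
    exact iceline_main ε b0 a hε hb0 ηs η' ξ' hηlim hξ'
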